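/- For every (x,v) ∈ ℝ³ × ℝ³ with v₁² + v₂² + v₃² = 1 and v₃² ≠ 1, the iterated Lie bracket [X̃₁, [X̃₁, X̃₀]] evaluated at (x,v) equals (−cos x₃, −sin x₃, 0, 0, 0, 0) − (v₃²(v₁ sin x₃ − v₂ cos x₃)/√(1−v₃²)) · (0, 0, 0, e₄(v)) − (v₃(v₂ sin x₃ + v₁ cos x₃)/√(1−v₃²)) · (0, 0, 0, e₅(v)). -/

import Mathlib

/-- The phase space `ℝ³ × ℝ³` with coordinates `(x₁,x₂,x₃,v₁,v₂,v₃)`. -/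
abbrev E6 : Type := (Fin 3 → ℝ) × (Fin 3 → ℝ)

/-- The Lie bracket of two vector fields on a normed space:
`[V,W](x) = DW(x)·V(x) − DV(x)·W(x)`. -/
noncomputable def lieBracket {E : Type*} [NormedAddCommGroup E] [NormedSpace ℝ E]
    (V W : E → E) : E → E :=
  fun x => fderiv ℝ W x (V x) - fderiv ℝ V x (W x)

/-- The drift vector field `X̃₀` of the projective process. -/
noncomputable def Xt0 : E6 → E6 := fun w =>
  let x := w.1; let v := w.2
  let α : ℝ := -(v 2) * v 0 * Real.sin (x 2) + v 2 * v 1 * Real.cos (x 2)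
  (![Real.cos (x 2), Real.sin (x 2), 1],
   ![-(v 2) * Real.sin (x 2) - α * v 0, v 2 * Real.cos (x 2) - α * v 1, -(α * v 2)])

/-- The vector field `X̃₁ = (0,0,1,0,0,0)`. -/
noncomputable def Xt1 : E6 → E6 := fun _ => (![0, 0, 1], ![0, 0, 0])

/-- The common shape of `X̃₂,…,X̃₅`. -/
noncomputable def XtGen (B : (Fin 3 → ℝ) → ℝ) (c : E6 → ℝ) : E6 → E6 := fun w =>
  let v := w.2
  (![0, 0, B w.1],
   ![c w * (-(v 2) * v 0), c w * (-(v 2) * v 1), c w * (1 - (v 2) ^ 2)])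

noncomputable def Xt2 : E6 → E6 :=
  XtGen (fun x => Real.sin (x 0)) (fun w => w.2 0 * Real.cos (w.1 0))

noncomputable def Xt3 : E6 → E6 :=
  XtGen (fun x => Real.cos (x 0)) (fun w => -(w.2 0) * Real.sin (w.1 0))

noncomputable def Xt4 : E6 → E6 :=
  XtGen (fun x => Real.sin (x 1)) (fun w => w.2 1 * Real.cos (w.1 1))

noncomputable def Xt5 : E6 → E6 :=
  XtGen (fun x => Real.cos (x 1)) (fun w => -(w.2 1) * Real.sin (w.1 1))

/-- `e₄(v) = (1/√(1−v₃²))·(−v₃v₁, −v₃v₂, 1−v₃²)`. -/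
noncomputable def e₄ (v : Fin 3 → ℝ) : Fin 3 → ℝ :=
  (Real.sqrt (1 - (v 2) ^ 2))⁻¹ • ![-(v 2) * v 0, -(v 2) * v 1, 1 - (v 2) ^ 2]

/-- `e₅(v) = (1/√(1−v₃²))·(−v₂, v₁, 0)`. -/
noncomputable def e₅ (v : Fin 3 → ℝ) : Fin 3 → ℝ :=
  (Real.sqrt (1 - (v 2) ^ 2))⁻¹ • ![-(v 1), v 0, 0]

/- ### Auxiliary machinery -/

lemma bracket_Xt1 (f : E6 → E6) (w : E6) :
    lieBracket Xt1 f w = fderiv ℝ f w ((![0,0,1], ![0,0,0]) : E6) := by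
  have h0 : fderiv ℝ Xt1 w = 0 := fderiv_const_apply _
  simp [lieBracket, Xt1, h0]

lemma dirDeriv (f : E6 → E6) (w u D : E6) (hf : DifferentiableAt ℝ f w)
    (hD : HasDerivAt (fun t : ℝ => f (w + t • u)) D 0) :
    fderiv ℝ f w u = D := by
  rw [← hf.lineDeriv_eq_fderiv]
  exact hD.deriv

lemma hasDerivAt_trig (s p q r : ℝ) :
    HasDerivAt (fun t : ℝ => p * Real.sin (s + t) + q * Real.cos (s + t) + r)
      (p * Real.cos s - q * Real.sin s) 0 := by
  have h : HasDerivAt (fun t : ℝ => s + t) 1 0 := (hasDerivAt_id 0).const_add s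
  have h1 := ((h.sin.const_mul p).add (h.cos.const_mul q)).add_const r
  refine h1.congr_deriv ?_
  simp; ring

/-- The first bracket `[X̃₁, X̃₀]` in closed form. -/
noncomputable def Ybr : E6 → E6 := fun w =>
  let x := w.1; let v := w.2
  let α' : ℝ := -(v 2) * v 0 * Real.cos (x 2) - v 2 * v 1 * Real.sin (x 2)
  (![-Real.sin (x 2), Real.cos (x 2), 0],
   ![-(v 2) * Real.cos (x 2) - α' * v 0, -(v 2) * Real.sin (x 2) - α' * v 1, -(α' * v 2)])

/-- The second bracket `[X̃₁, [X̃₁, X̃₀]]` in closed form. -/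
noncomputable def Zbr : E6 → E6 := fun w =>
  let x := w.1; let v := w.2
  (![-Real.cos (x 2), -Real.sin (x 2), 0],
   ![v 2 * v 0 * v 1 * Real.cos (x 2) - (v 2 * v 0 ^ 2 - v 2) * Real.sin (x 2),
     (v 2 * v 1 ^ 2 - v 2) * Real.cos (x 2) - v 2 * v 0 * v 1 * Real.sin (x 2),
     v 2 ^ 2 * v 1 * Real.cos (x 2) - v 2 ^ 2 * v 0 * Real.sin (x 2)]) 

lemma Xt0_diff (w : E6) : DifferentiableAt ℝ Xt0 w := by
  apply DifferentiableAt.prodMk <;>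
  · apply differentiableAt_pi.2
    intro i
    fin_cases i <;> simp [Xt0] <;> fun_prop

lemma Ybr_diff (w : E6) : DifferentiableAt ℝ Ybr w := by
  apply DifferentiableAt.prodMk <;>
  · apply differentiableAt_pi.2
    intro i
    fin_cases i <;> simp [Ybr] <;> fun_prop

lemma Xt0_deriv (w : E6) :
    HasDerivAt (fun t : ℝ => Xt0 (w + t • ((![0,0,1], ![0,0,0]) : E6))) (Ybr w) 0 := by
  have key : (fun t : ℝ => Xt0 (w + t • ((![0,0,1], ![0,0,0]) : E6)))
      = fun t => ((![(0:ℝ) * Real.sin (w.1 2 + t) + 1 * Real.cos (w.1 2 + t) + 0,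
            1 * Real.sin (w.1 2 + t) + 0 * Real.cos (w.1 2 + t) + 0,
            0 * Real.sin (w.1 2 + t) + 0 * Real.cos (w.1 2 + t) + 1],
          ![(w.2 2 * w.2 0 ^ 2 - w.2 2) * Real.sin (w.1 2 + t)
              + (-(w.2 2 * w.2 1 * w.2 0)) * Real.cos (w.1 2 + t) + 0,
            (w.2 2 * w.2 0 * w.2 1) * Real.sin (w.1 2 + t)
              + (w.2 2 - w.2 2 * w.2 1 ^ 2) * Real.cos (w.1 2 + t) + 0,
            (w.2 2 ^ 2 * w.2 0) * Real.sin (w.1 2 + t)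
              + (-(w.2 2 ^ 2 * w.2 1)) * Real.cos (w.1 2 + t) + 0]) : E6) := by
    funext t
    refine Prod.ext ?_ ?_ <;> funext i <;> fin_cases i <;> simp [Xt0] <;> ring
  rw [key]
  refine HasDerivAt.prodMk (hasDerivAt_pi.2 fun i => ?_) (hasDerivAt_pi.2 fun i => ?_) <;>
      fin_cases i <;>
    · refine (hasDerivAt_trig (w.1 2) _ _ _).congr_deriv ?_
      simp [Ybr]; try ring

lemma Ybr_deriv (w : E6) :
    HasDerivAt (fun t : ℝ => Ybr (w + t • ((![0,0,1], ![0,0,0]) : E6))) (Zbr w) 0 := by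
  have key : (fun t : ℝ => Ybr (w + t • ((![0,0,1], ![0,0,0]) : E6)))
      = fun t => ((![(-1 : ℝ) * Real.sin (w.1 2 + t) + 0 * Real.cos (w.1 2 + t) + 0,
            0 * Real.sin (w.1 2 + t) + 1 * Real.cos (w.1 2 + t) + 0,
            0 * Real.sin (w.1 2 + t) + 0 * Real.cos (w.1 2 + t) + 0],
          ![(w.2 2 * w.2 0 * w.2 1) * Real.sin (w.1 2 + t)
              + (w.2 2 * w.2 0 ^ 2 - w.2 2) * Real.cos (w.1 2 + t) + 0,
            (w.2 2 * w.2 1 ^ 2 - w.2 2) * Real.sin (w.1 2 + t)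
              + (w.2 2 * w.2 0 * w.2 1) * Real.cos (w.1 2 + t) + 0,
            (w.2 2 ^ 2 * w.2 1) * Real.sin (w.1 2 + t)
              + (w.2 2 ^ 2 * w.2 0) * Real.cos (w.1 2 + t) + 0]) : E6) := by
    funext t
    refine Prod.ext ?_ ?_ <;> funext i <;> fin_cases i <;> simp [Ybr] <;> ring
  rw [key]
  refine HasDerivAt.prodMk (hasDerivAt_pi.2 fun i => ?_) (hasDerivAt_pi.2 fun i => ?_) <;>
      fin_cases i <;>
    · refine (hasDerivAt_trig (w.1 2) _ _ _).congr_deriv ?_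
      simp [Zbr]; try ring

/-- For `(x,v)` with `|v| = 1` and `v₃² ≠ 1`,
`[X̃₁, [X̃₁, X̃₀]](x,v) = (−cos x₃, −sin x₃, 0, 0, 0, 0)
  − (v₃²(v₁ sin x₃ − v₂ cos x₃)/√(1−v₃²))·(0,0,0,e₄(v))
  − (v₃(v₂ sin x₃ + v₁ cos x₃)/√(1−v₃²))·(0,0,0,e₅(v))`. -/
theorem statement6 (x v : Fin 3 → ℝ)
    (hv : (v 0) ^ 2 + (v 1) ^ 2 + (v 2) ^ 2 = 1) (hv3 : (v 2) ^ 2 ≠ 1) :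
    lieBracket Xt1 (lieBracket Xt1 Xt0) (x, v)
      = ((![-Real.cos (x 2), -Real.sin (x 2), 0], ![0, 0, 0]) : E6)
        - ((v 2) ^ 2 * (v 0 * Real.sin (x 2) - v 1 * Real.cos (x 2)) / Real.sqrt (1 - (v 2) ^ 2))
            • ((![0, 0, 0], e₄ v) : E6)
        - (v 2 * (v 1 * Real.sin (x 2) + v 0 * Real.cos (x 2)) / Real.sqrt (1 - (v 2) ^ 2))
            • ((![0, 0, 0], e₅ v) : E6) := by
  have hbr1 : lieBracket Xt1 Xt0 = Ybr := by
    funext w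
    rw [bracket_Xt1, dirDeriv Xt0 w _ (Ybr w) (Xt0_diff w) (Xt0_deriv w)]
  rw [hbr1, bracket_Xt1, dirDeriv Ybr (x, v) _ (Zbr (x, v)) (Ybr_diff _) (Ybr_deriv _)]
  -- final algebra
  have hq : (0:ℝ) < 1 - v 2 ^ 2 := by
    have h1 : v 2 ^ 2 ≤ 1 := by nlinarith [sq_nonneg (v 0), sq_nonneg (v 1)]
    cases lt_or_eq_of_le h1 with
    | inl h => linarith
    | inr h => exact absurd h hv3
  have hr : Real.sqrt (1 - v 2 ^ 2) ^ 2 = 1 - v 2 ^ 2 := Real.sq_sqrt hq.le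
  have hrpos : 0 < Real.sqrt (1 - v 2 ^ 2) := Real.sqrt_pos.2 hq
  refine Prod.ext ?_ ?_ <;> funext i <;> fin_cases i <;>
      simp [Zbr, e₄, e₅, Prod.smul_def, Prod.sub_def] <;> field_simp
  · rw [hr]; linear_combination (-(v 2) * Real.sin (x 2)) * hv
  · rw [hr]; linear_combination (v 2 * Real.cos (x 2)) * hv
  · rw [hr]; ring
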